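/- Let n ≥ 1, let X₁ and X₂ be Delone subsets of ℝⁿ, let R > 0, let R' > 0, and let ρ : ℝⁿ → [0,∞) be a continuous function supported in the closed ball of radius R about the origin with ∫_{ℝⁿ} ρ = 1. For i = 1, 2 define f_i(x) = ∑_{x' ∈ X_i} ρ(x − x') (a finite sum for each x, since X_i is uniformly discrete). Suppose b₀ : X₁ × X₂ → [0,1] satisfies: ∑_{y' ∈ X₂} b₀(x', y') = 1 for every x' ∈ X₁; ∑_{x' ∈ X₁} b₀(x', y') = 1 for every y' ∈ X₂; and b₀(x', y') = 0 whenever ‖x' − y'‖ > R'. Then the function b(x,y) = ∑_{x' ∈ X₁} ∑_{y' ∈ X₂} ρ(x − x') ρ(y − y') b₀(x', y') is well defined (for each (x,y) only finitely many terms are nonzero), and satisfies: ∫_{ℝⁿ} b(x,y) dy = f₁(x) for every x ∈ ℝⁿ; ∫_{ℝⁿ} b(x,y) dx = f₂(y) for every y ∈ ℝⁿ; and b(x,y) = 0 whenever ‖x − y‖ > 2R + R'. -/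

import Mathlib

open MeasureTheory Metric Set

lemma ud_closed_discrete {E : Type*} [MetricSpace E] {S : Set E} {δ : ℝ} (hδ : 0 < δ)
    (h : ∀ x ∈ S, ∀ y ∈ S, x ≠ y → δ ≤ dist x y) : IsClosed S ∧ DiscreteTopology S := by
  rw [← isDiscrete_iff_discreteTopology, isClosed_and_discrete_iff]
  intro x
  rw [Filter.disjoint_principal_right]
  rw [mem_nhdsWithin_iff]
  by_cases hp : ∃ p ∈ S, p ≠ x ∧ dist x p < δ / 2
  · obtain ⟨p, hpS, hpx, hpd⟩ := hp
    refine ⟨min (δ / 2) (dist x p), lt_min (by linarith) (dist_pos.2 (Ne.symm hpx)), ?_⟩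
    intro q ⟨hq1, hq2⟩ hqS
    simp only [mem_ball] at hq1
    have hqx : dist x q < min (δ / 2) (dist x p) := by rwa [dist_comm]
    have hqp : q ≠ p := by
      intro hqp; subst hqp
      exact absurd hqx (by simp)
    have : δ ≤ dist p q := h p hpS q hqS (Ne.symm hqp)
    have : dist p q ≤ dist p x + dist x q := dist_triangle _ _ _
    have h1 : dist x q < δ / 2 := lt_of_lt_of_le hqx (min_le_left _ _)
    have h2 : dist p x < δ / 2 := by rw [dist_comm]; exact hpd
    linarith
  · refine ⟨δ / 2, by linarith, ?_⟩
    intro q ⟨hq1, hq2⟩ hqS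
    simp only [mem_ball] at hq1
    exact hp ⟨q, hqS, hq2, by rwa [dist_comm]⟩

lemma ud_finite_ball {E : Type*} [MetricSpace E] [ProperSpace E] {S : Set E} {δ : ℝ}
    (hδ : 0 < δ) (h : ∀ x ∈ S, ∀ y ∈ S, x ≠ y → δ ≤ dist x y) (c : E) (r : ℝ) :
    {p : S | dist c (p : E) ≤ r}.Finite := by
  obtain ⟨hcl, hdisc⟩ := ud_closed_discrete hδ h
  haveI := hdisc
  have hfin : (closedBall c r ∩ S).Finite :=
    Metric.finite_isBounded_inter_isClosed (isDiscrete_iff_discreteTopology.mpr hdisc) isBounded_closedBall hcl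
  have heq : {p : S | dist c (p : E) ≤ r} = Subtype.val ⁻¹' (closedBall c r ∩ S) := by
    ext p
    simp [mem_closedBall, dist_comm, p.2]
  rw [heq]
  exact hfin.preimage Subtype.val_injective.injOn

lemma ud_countable {E : Type*} [NormedAddCommGroup E] [ProperSpace E] {S : Set E} {δ : ℝ}
    (hδ : 0 < δ) (h : ∀ x ∈ S, ∀ y ∈ S, x ≠ y → δ ≤ dist x y) : Countable S := by
  have heq : S = ⋃ k : ℕ, Subtype.val '' {p : S | dist 0 (p : E) ≤ k} := by
    ext z
    simp only [Set.mem_iUnion, Set.mem_image, Set.mem_setOf_eq]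
    constructor
    · intro hz
      exact ⟨⌈dist (0:E) z⌉₊, ⟨z, hz⟩, Nat.le_ceil _, rfl⟩
    · rintro ⟨k, ⟨p, hp⟩, _, rfl⟩
      exact hp
  have hc : S.Countable := by
    rw [heq]
    exact Set.countable_iUnion fun k => ((ud_finite_ball hδ h 0 k).image _).countable
  exact hc.to_subtype

set_option maxHeartbeats 1000000 in
/-- **Bounded transport between point sets induces bounded transport between smoothed
densities** (Theorem 3.1 of the paper). Given Delone sets `X₁, X₂ ⊆ ℝⁿ`, a bump function
`ρ` supported in a ball of radius `R` with total integral 1, and a doubly stochastic kernel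
`b₀` on `X₁ × X₂` with transport distance at most `R'`, the smoothed kernel
`b(x,y) = ∑ ρ(x-x')ρ(y-y')b₀(x',y')` is well defined (finitely many nonzero terms) and is
a transport from `f₁(x) = ∑ ρ(x-x')` to `f₂(y) = ∑ ρ(y-y')` bounded by `2R + R'`. -/
theorem smoothed_bounded_transport
    (n : ℕ) (hn : 1 ≤ n)
    (X₁ X₂ : Set (EuclideanSpace ℝ (Fin n)))
    (hX₁ud : ∃ δ > 0, ∀ x ∈ X₁, ∀ y ∈ X₁, x ≠ y → δ ≤ dist x y)
    (hX₂ud : ∃ δ > 0, ∀ x ∈ X₂, ∀ y ∈ X₂, x ≠ y → δ ≤ dist x y)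
    (hX₁rd : ∃ R₀ > (0 : ℝ), ∀ x : EuclideanSpace ℝ (Fin n), ∃ p ∈ X₁, dist x p ≤ R₀)
    (hX₂rd : ∃ R₀ > (0 : ℝ), ∀ x : EuclideanSpace ℝ (Fin n), ∃ p ∈ X₂, dist x p ≤ R₀)
    (R R' : ℝ) (hR : 0 < R) (hR' : 0 < R')
    (ρ : EuclideanSpace ℝ (Fin n) → ℝ)
    (hρcont : Continuous ρ) (hρ0 : ∀ x, 0 ≤ ρ x)
    (hρsupp : ∀ x, ρ x ≠ 0 → ‖x‖ ≤ R)
    (hρint : (∫ x, ρ x) = 1)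
    (b₀ : X₁ → X₂ → ℝ)
    (hb₀0 : ∀ x' y', 0 ≤ b₀ x' y') (hb₀1 : ∀ x' y', b₀ x' y' ≤ 1)
    (hrow : ∀ x' : X₁, (∑' y' : X₂, b₀ x' y') = 1)
    (hcol : ∀ y' : X₂, (∑' x' : X₁, b₀ x' y') = 1)
    (hvanish : ∀ (x' : X₁) (y' : X₂),
      R' < ‖(x' : EuclideanSpace ℝ (Fin n)) - (y' : EuclideanSpace ℝ (Fin n))‖ →
      b₀ x' y' = 0) :
    (∀ x : EuclideanSpace ℝ (Fin n),
      {x' : X₁ | ρ (x - (x' : EuclideanSpace ℝ (Fin n))) ≠ 0}.Finite) ∧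
    (∀ y : EuclideanSpace ℝ (Fin n),
      {y' : X₂ | ρ (y - (y' : EuclideanSpace ℝ (Fin n))) ≠ 0}.Finite) ∧
    (∀ x y : EuclideanSpace ℝ (Fin n),
      {p : X₁ × X₂ | ρ (x - (p.1 : EuclideanSpace ℝ (Fin n))) *
        ρ (y - (p.2 : EuclideanSpace ℝ (Fin n))) * b₀ p.1 p.2 ≠ 0}.Finite) ∧
    (∀ x : EuclideanSpace ℝ (Fin n),
      (∫ y, (∑' p : X₁ × X₂, ρ (x - (p.1 : EuclideanSpace ℝ (Fin n))) *
        ρ (y - (p.2 : EuclideanSpace ℝ (Fin n))) * b₀ p.1 p.2)) =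
      (∑' x' : X₁, ρ (x - (x' : EuclideanSpace ℝ (Fin n))))) ∧
    (∀ y : EuclideanSpace ℝ (Fin n),
      (∫ x, (∑' p : X₁ × X₂, ρ (x - (p.1 : EuclideanSpace ℝ (Fin n))) *
        ρ (y - (p.2 : EuclideanSpace ℝ (Fin n))) * b₀ p.1 p.2)) =
      (∑' y' : X₂, ρ (y - (y' : EuclideanSpace ℝ (Fin n))))) ∧
    (∀ x y : EuclideanSpace ℝ (Fin n), 2 * R + R' < ‖x - y‖ →
      (∑' p : X₁ × X₂, ρ (x - (p.1 : EuclideanSpace ℝ (Fin n))) *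
        ρ (y - (p.2 : EuclideanSpace ℝ (Fin n))) * b₀ p.1 p.2) = 0) := by
  classical
  obtain ⟨δ₁, hδ₁, hsep₁⟩ := hX₁ud
  obtain ⟨δ₂, hδ₂, hsep₂⟩ := hX₂ud
  haveI : Countable X₁ := ud_countable hδ₁ hsep₁
  haveI : Countable X₂ := ud_countable hδ₂ hsep₂
  have key1 : ∀ x : EuclideanSpace ℝ (Fin n),
      {x' : X₁ | ρ (x - (x' : EuclideanSpace ℝ (Fin n))) ≠ 0}.Finite := by
    intro x
    refine (ud_finite_ball hδ₁ hsep₁ x R).subset ?_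
    intro x' hx'
    simp only [Set.mem_setOf_eq] at hx' ⊢
    have := hρsupp _ hx'
    rwa [dist_eq_norm]
  have key2 : ∀ y : EuclideanSpace ℝ (Fin n),
      {y' : X₂ | ρ (y - (y' : EuclideanSpace ℝ (Fin n))) ≠ 0}.Finite := by
    intro y
    refine (ud_finite_ball hδ₂ hsep₂ y R).subset ?_
    intro y' hy'
    simp only [Set.mem_setOf_eq] at hy' ⊢
    have := hρsupp _ hy'
    rwa [dist_eq_norm]
  have key3 : ∀ x y : EuclideanSpace ℝ (Fin n),
      {p : X₁ × X₂ | ρ (x - (p.1 : EuclideanSpace ℝ (Fin n))) *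
        ρ (y - (p.2 : EuclideanSpace ℝ (Fin n))) * b₀ p.1 p.2 ≠ 0}.Finite := by
    intro x y
    refine ((key1 x).prod (key2 y)).subset ?_
    rintro ⟨x', y'⟩ hp
    simp only [Set.mem_setOf_eq, Set.mem_prod] at hp ⊢
    constructor
    · intro h; exact hp (by rw [h, zero_mul, zero_mul])
    · intro h; exact hp (by rw [h, mul_zero, zero_mul])
  have hb₀row : ∀ x' : X₁, Summable (b₀ x') := by
    intro x'
    by_contra hcon
    have h0 := tsum_eq_zero_of_not_summable hcon
    rw [hrow x'] at h0
    exact one_ne_zero h0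
  have hb₀col : ∀ y' : X₂, Summable (fun x' => b₀ x' y') := by
    intro y'
    by_contra hcon
    have h0 := tsum_eq_zero_of_not_summable hcon
    rw [hcol y'] at h0
    exact one_ne_zero h0
  refine ⟨key1, key2, key3, ?_, ?_, ?_⟩
  · -- marginal over y
    intro x
    have hcont : ∀ p : X₁ × X₂, Continuous fun y : EuclideanSpace ℝ (Fin n) =>
        ρ (x - (p.1 : EuclideanSpace ℝ (Fin n))) * ρ (y - (p.2 : EuclideanSpace ℝ (Fin n)))
          * b₀ p.1 p.2 :=
      fun p => (continuous_const.mul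
        (hρcont.comp (continuous_id.sub continuous_const))).mul continuous_const
    have hcs : ∀ p : X₁ × X₂, HasCompactSupport fun y : EuclideanSpace ℝ (Fin n) =>
        ρ (x - (p.1 : EuclideanSpace ℝ (Fin n))) * ρ (y - (p.2 : EuclideanSpace ℝ (Fin n)))
          * b₀ p.1 p.2 := by
      intro p
      apply HasCompactSupport.intro (isCompact_closedBall ((p.2 : EuclideanSpace ℝ (Fin n))) R)
      intro y hy
      by_contra hne
      apply hy
      have hρne : ρ (y - (p.2 : EuclideanSpace ℝ (Fin n))) ≠ 0 := by
        intro h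
        exact hne (by rw [h, mul_zero, zero_mul])
      have := hρsupp _ hρne
      simpa [mem_closedBall, dist_eq_norm] using this
    have hint : ∀ p : X₁ × X₂, Integrable fun y : EuclideanSpace ℝ (Fin n) =>
        ρ (x - (p.1 : EuclideanSpace ℝ (Fin n))) * ρ (y - (p.2 : EuclideanSpace ℝ (Fin n)))
          * b₀ p.1 p.2 :=
      fun p => (hcont p).integrable_of_hasCompactSupport (hcs p)
    have hintval : ∀ p : X₁ × X₂,
        (∫ y, ρ (x - (p.1 : EuclideanSpace ℝ (Fin n))) *
          ρ (y - (p.2 : EuclideanSpace ℝ (Fin n))) * b₀ p.1 p.2) =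
        ρ (x - (p.1 : EuclideanSpace ℝ (Fin n))) * b₀ p.1 p.2 := by
      intro p
      have heq : (fun y : EuclideanSpace ℝ (Fin n) =>
          ρ (x - (p.1 : EuclideanSpace ℝ (Fin n))) * ρ (y - (p.2 : EuclideanSpace ℝ (Fin n)))
            * b₀ p.1 p.2) =
          fun y => (ρ (x - (p.1 : EuclideanSpace ℝ (Fin n))) * b₀ p.1 p.2) *
            ρ (y - (p.2 : EuclideanSpace ℝ (Fin n))) := by
        funext y; ring
      rw [heq, integral_const_mul, integral_sub_right_eq_self ρ
        ((p.2 : EuclideanSpace ℝ (Fin n))), hρint, mul_one]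
    have hrowsum : ∀ x' : X₁, Summable fun y' : X₂ =>
        ρ (x - (x' : EuclideanSpace ℝ (Fin n))) * b₀ x' y' :=
      fun x' => (hb₀row x').mul_left _
    have hg : Summable (fun p : X₁ × X₂ =>
        ρ (x - (p.1 : EuclideanSpace ℝ (Fin n))) * b₀ p.1 p.2) := by
      rw [summable_prod_of_nonneg (fun p => mul_nonneg (hρ0 _) (hb₀0 _ _))]
      constructor
      · exact fun x' => hrowsum x'
      · have heq : (fun x' : X₁ => ∑' y' : X₂,
            ρ (x - (x' : EuclideanSpace ℝ (Fin n))) * b₀ x' y') =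
            fun x' : X₁ => ρ (x - (x' : EuclideanSpace ℝ (Fin n))) := by
          funext x'; rw [tsum_mul_left, hrow, mul_one]
        rw [heq]
        exact summable_of_finite_support (key1 x)
    have hnormsum : Summable fun p : X₁ × X₂ =>
        ∫ y, ‖ρ (x - (p.1 : EuclideanSpace ℝ (Fin n))) *
          ρ (y - (p.2 : EuclideanSpace ℝ (Fin n))) * b₀ p.1 p.2‖ := by
      have heq : (fun p : X₁ × X₂ =>
          ∫ y, ‖ρ (x - (p.1 : EuclideanSpace ℝ (Fin n))) *
            ρ (y - (p.2 : EuclideanSpace ℝ (Fin n))) * b₀ p.1 p.2‖) =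
          fun p => ρ (x - (p.1 : EuclideanSpace ℝ (Fin n))) * b₀ p.1 p.2 := by
        funext p
        rw [← hintval p]
        congr 1
        funext y
        exact Real.norm_of_nonneg (mul_nonneg (mul_nonneg (hρ0 _) (hρ0 _)) (hb₀0 _ _))
      rw [heq]
      exact hg
    calc (∫ y, ∑' p : X₁ × X₂, ρ (x - (p.1 : EuclideanSpace ℝ (Fin n))) *
          ρ (y - (p.2 : EuclideanSpace ℝ (Fin n))) * b₀ p.1 p.2)
        = ∑' p : X₁ × X₂, ∫ y, ρ (x - (p.1 : EuclideanSpace ℝ (Fin n))) *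
          ρ (y - (p.2 : EuclideanSpace ℝ (Fin n))) * b₀ p.1 p.2 :=
          (integral_tsum_of_summable_integral_norm hint hnormsum).symm
      _ = ∑' p : X₁ × X₂, ρ (x - (p.1 : EuclideanSpace ℝ (Fin n))) * b₀ p.1 p.2 :=
          tsum_congr hintval
      _ = ∑' (x' : X₁) (y' : X₂), ρ (x - (x' : EuclideanSpace ℝ (Fin n))) * b₀ x' y' :=
          hg.tsum_prod' hrowsum
      _ = ∑' x' : X₁, ρ (x - (x' : EuclideanSpace ℝ (Fin n))) :=
          tsum_congr fun x' => by rw [tsum_mul_left, hrow, mul_one]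
  · -- marginal over x
    intro y
    have hcont : ∀ p : X₁ × X₂, Continuous fun x : EuclideanSpace ℝ (Fin n) =>
        ρ (x - (p.1 : EuclideanSpace ℝ (Fin n))) * ρ (y - (p.2 : EuclideanSpace ℝ (Fin n)))
          * b₀ p.1 p.2 :=
      fun p => ((hρcont.comp (continuous_id.sub continuous_const)).mul
        continuous_const).mul continuous_const
    have hcs : ∀ p : X₁ × X₂, HasCompactSupport fun x : EuclideanSpace ℝ (Fin n) =>
        ρ (x - (p.1 : EuclideanSpace ℝ (Fin n))) * ρ (y - (p.2 : EuclideanSpace ℝ (Fin n)))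
          * b₀ p.1 p.2 := by
      intro p
      apply HasCompactSupport.intro (isCompact_closedBall ((p.1 : EuclideanSpace ℝ (Fin n))) R)
      intro x hx
      by_contra hne
      apply hx
      have hρne : ρ (x - (p.1 : EuclideanSpace ℝ (Fin n))) ≠ 0 := by
        intro h
        exact hne (by rw [h, zero_mul, zero_mul])
      have := hρsupp _ hρne
      simpa [mem_closedBall, dist_eq_norm] using this
    have hint : ∀ p : X₁ × X₂, Integrable fun x : EuclideanSpace ℝ (Fin n) =>
        ρ (x - (p.1 : EuclideanSpace ℝ (Fin n))) * ρ (y - (p.2 : EuclideanSpace ℝ (Fin n)))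
          * b₀ p.1 p.2 :=
      fun p => (hcont p).integrable_of_hasCompactSupport (hcs p)
    have hintval : ∀ p : X₁ × X₂,
        (∫ x, ρ (x - (p.1 : EuclideanSpace ℝ (Fin n))) *
          ρ (y - (p.2 : EuclideanSpace ℝ (Fin n))) * b₀ p.1 p.2) =
        ρ (y - (p.2 : EuclideanSpace ℝ (Fin n))) * b₀ p.1 p.2 := by
      intro p
      have heq : (fun x : EuclideanSpace ℝ (Fin n) =>
          ρ (x - (p.1 : EuclideanSpace ℝ (Fin n))) * ρ (y - (p.2 : EuclideanSpace ℝ (Fin n)))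
            * b₀ p.1 p.2) =
          fun x => (ρ (y - (p.2 : EuclideanSpace ℝ (Fin n))) * b₀ p.1 p.2) *
            ρ (x - (p.1 : EuclideanSpace ℝ (Fin n))) := by
        funext x; ring
      rw [heq, integral_const_mul, integral_sub_right_eq_self ρ
        ((p.1 : EuclideanSpace ℝ (Fin n))), hρint, mul_one]
    have hcolsum : ∀ y' : X₂, Summable fun x' : X₁ =>
        ρ (y - (y' : EuclideanSpace ℝ (Fin n))) * b₀ x' y' :=
      fun y' => (hb₀col y').mul_left _
    have hf : Summable (fun q : X₂ × X₁ =>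
        ρ (y - (q.1 : EuclideanSpace ℝ (Fin n))) * b₀ q.2 q.1) := by
      rw [summable_prod_of_nonneg (fun q => mul_nonneg (hρ0 _) (hb₀0 _ _))]
      constructor
      · exact fun y' => hcolsum y'
      · have heq : (fun y' : X₂ => ∑' x' : X₁,
            ρ (y - (y' : EuclideanSpace ℝ (Fin n))) * b₀ x' y') =
            fun y' : X₂ => ρ (y - (y' : EuclideanSpace ℝ (Fin n))) := by
          funext y'; rw [tsum_mul_left, hcol, mul_one]
        rw [heq]
        exact summable_of_finite_support (key2 y)
    have hg : Summable (fun p : X₁ × X₂ =>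
        ρ (y - (p.2 : EuclideanSpace ℝ (Fin n))) * b₀ p.1 p.2) :=
      (Equiv.prodComm ↥X₁ ↥X₂).summable_iff.mpr hf
    have hnormsum : Summable fun p : X₁ × X₂ =>
        ∫ x, ‖ρ (x - (p.1 : EuclideanSpace ℝ (Fin n))) *
          ρ (y - (p.2 : EuclideanSpace ℝ (Fin n))) * b₀ p.1 p.2‖ := by
      have heq : (fun p : X₁ × X₂ =>
          ∫ x, ‖ρ (x - (p.1 : EuclideanSpace ℝ (Fin n))) *
            ρ (y - (p.2 : EuclideanSpace ℝ (Fin n))) * b₀ p.1 p.2‖) =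
          fun p => ρ (y - (p.2 : EuclideanSpace ℝ (Fin n))) * b₀ p.1 p.2 := by
        funext p
        rw [← hintval p]
        congr 1
        funext x
        exact Real.norm_of_nonneg (mul_nonneg (mul_nonneg (hρ0 _) (hρ0 _)) (hb₀0 _ _))
      rw [heq]
      exact hg
    calc (∫ x, ∑' p : X₁ × X₂, ρ (x - (p.1 : EuclideanSpace ℝ (Fin n))) *
          ρ (y - (p.2 : EuclideanSpace ℝ (Fin n))) * b₀ p.1 p.2)
        = ∑' p : X₁ × X₂, ∫ x, ρ (x - (p.1 : EuclideanSpace ℝ (Fin n))) *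
          ρ (y - (p.2 : EuclideanSpace ℝ (Fin n))) * b₀ p.1 p.2 :=
          (integral_tsum_of_summable_integral_norm hint hnormsum).symm
      _ = ∑' p : X₁ × X₂, ρ (y - (p.2 : EuclideanSpace ℝ (Fin n))) * b₀ p.1 p.2 :=
          tsum_congr hintval
      _ = ∑' q : X₂ × X₁, ρ (y - (q.1 : EuclideanSpace ℝ (Fin n))) * b₀ q.2 q.1 :=
          ((Equiv.prodComm ↥X₂ ↥X₁).tsum_eq (fun p : X₁ × X₂ =>
            ρ (y - (p.2 : EuclideanSpace ℝ (Fin n))) * b₀ p.1 p.2)).symm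
      _ = ∑' (y' : X₂) (x' : X₁), ρ (y - (y' : EuclideanSpace ℝ (Fin n))) * b₀ x' y' :=
          hf.tsum_prod' hcolsum
      _ = ∑' y' : X₂, ρ (y - (y' : EuclideanSpace ℝ (Fin n))) :=
          tsum_congr fun y' => by rw [tsum_mul_left, hcol, mul_one]
  · -- support bound
    intro x y hxy
    have : ∀ p : X₁ × X₂, ρ (x - (p.1 : EuclideanSpace ℝ (Fin n))) *
        ρ (y - (p.2 : EuclideanSpace ℝ (Fin n))) * b₀ p.1 p.2 = 0 := by
      intro p
      rcases eq_or_ne (ρ (x - (p.1 : EuclideanSpace ℝ (Fin n)))) 0 with h1 | h1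
      · rw [h1, zero_mul, zero_mul]
      rcases eq_or_ne (ρ (y - (p.2 : EuclideanSpace ℝ (Fin n)))) 0 with h2 | h2
      · rw [h2, mul_zero, zero_mul]
      rcases eq_or_ne (b₀ p.1 p.2) 0 with h3 | h3
      · rw [h3, mul_zero]
      exfalso
      have hr1 := hρsupp _ h1
      have hr2 := hρsupp _ h2
      have hr3 : ‖(p.1 : EuclideanSpace ℝ (Fin n)) - (p.2 : EuclideanSpace ℝ (Fin n))‖ ≤ R' := by
        by_contra hc
        exact h3 (hvanish p.1 p.2 (lt_of_not_ge hc))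
      have htri : ‖x - y‖ ≤ ‖x - (p.1 : EuclideanSpace ℝ (Fin n))‖ +
          ‖(p.1 : EuclideanSpace ℝ (Fin n)) - (p.2 : EuclideanSpace ℝ (Fin n))‖ +
          ‖(p.2 : EuclideanSpace ℝ (Fin n)) - y‖ := by
        have heq : x - y = (x - (p.1 : EuclideanSpace ℝ (Fin n))) +
            ((p.1 : EuclideanSpace ℝ (Fin n)) - (p.2 : EuclideanSpace ℝ (Fin n))) +
            ((p.2 : EuclideanSpace ℝ (Fin n)) - y) := by abel
        rw [heq]
        exact norm_add₃_le
      have hr2' : ‖(p.2 : EuclideanSpace ℝ (Fin n)) - y‖ ≤ R := by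
        rwa [norm_sub_rev]
      linarith
    rw [tsum_congr this, tsum_zero]
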